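/- Let A ≥ 1 be a natural number, n ≥ 1, let p₁, …, pₙ ∈ (0,1) and s₀ ∈ (0,1). Define the backward iterates u_n = s₀ and u_j = (1 − p_{j+1}·(1 − u_{j+1}))^A for 0 ≤ j < n, and set P_n := 1 and P_j := ∏_{i=j+1}^{n} (A·p_i) for 0 ≤ j < n, and η_{n−1} := P_{n−1}/(1 − u_{n−1}). Assume moreover that p_{j+1}·(1 − u_{j+1}) < 1/2 for all 0 ≤ j < n, and fix 0 ≤ j ≤ n−1 such that η_{n−1} − (1/A)·Σ_{k=j}^{n−2} P_k > 0. Then 1 − u_j ≤ P_j / (η_{n−1} − (1/A)·Σ_{k=j}^{n−2} P_k). -/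
import Mathlib

/-- Backward iterates of binomial generating functions, upper bound: with `u n = s₀ ∈ (0,1)`,
`u j = (1 − p_{j+1}(1 − u_{j+1}))^A`, `P j = ∏_{i=j+1}^n (A·p_i)` and
`η = P_{n−1}/(1 − u_{n−1})`, if moreover `p_{j+1}(1 − u_{j+1}) < 1/2` for all `j < n` and
`η − (1/A)·Σ_{k=j}^{n−2} P k > 0`, then `1 − u j ≤ P j / (η − (1/A)·Σ_{k=j}^{n−2} P k)`. -/
theorem stmt_16 (A n : ℕ) (hA : 1 ≤ A) (hn : 1 ≤ n) (p u : ℕ → ℝ)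
    (hp : ∀ k, 1 ≤ k → k ≤ n → p k ∈ Set.Ioo (0 : ℝ) 1)
    (hun : u n ∈ Set.Ioo (0 : ℝ) 1)
    (hu : ∀ j, j < n → u j = (1 - p (j + 1) * (1 - u (j + 1))) ^ A)
    (hhalf : ∀ j, j < n → p (j + 1) * (1 - u (j + 1)) < 1 / 2)
    (j : ℕ) (hj : j < n)
    (hpos : 0 <
      (∏ i ∈ Finset.Icc n n, ((A : ℝ) * p i)) / (1 - u (n - 1)) -
        (1 / (A : ℝ)) *
          ∑ k ∈ Finset.Ico j (n - 1), ∏ i ∈ Finset.Icc (k + 1) n, ((A : ℝ) * p i)) :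
    1 - u j ≤
      (∏ i ∈ Finset.Icc (j + 1) n, ((A : ℝ) * p i)) /
        ((∏ i ∈ Finset.Icc n n, ((A : ℝ) * p i)) / (1 - u (n - 1)) -
          (1 / (A : ℝ)) *
            ∑ k ∈ Finset.Ico j (n - 1), ∏ i ∈ Finset.Icc (k + 1) n, ((A : ℝ) * p i)) := by
  have hA0 : (0:ℝ) < A := by exact_mod_cast hA
  set P : ℕ → ℝ := fun k => ∏ i ∈ Finset.Icc (k + 1) n, ((A : ℝ) * p i) with hP
  -- positivity of P
  have hPpos : ∀ k, 0 < P k := by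
    intro k
    apply Finset.prod_pos
    intro i hi
    simp only [Finset.mem_Icc] at hi
    have : 0 < p i := (hp i (le_trans (Nat.succ_le_succ (Nat.zero_le k)) hi.1) hi.2).1
    positivity
  -- u k ∈ (0,1) for all k ≤ n
  have huIoo : ∀ d k, k + d = n → u k ∈ Set.Ioo (0:ℝ) 1 := by
    intro d
    induction d with
    | zero =>
      intro k hk
      have : k = n := by omega
      subst this; exact hun
    | succ d ih =>
      intro k hk
      have hk1 : k + 1 + d = n := by omega
      have hkn : k < n := by omega
      have huk1 := ih (k + 1) hk1
      have hq0 : 0 < p (k + 1) * (1 - u (k + 1)) := by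
        have hp1 := (hp (k + 1) (by omega) (by omega)).1
        have : 1 - u (k + 1) > 0 := by linarith [huk1.2]
        positivity
      have hq2 := hhalf k hkn
      rw [hu k hkn]
      constructor
      · apply pow_pos; linarith
      · apply pow_lt_one₀ (by linarith) (by linarith) (by omega)
  -- decomposition P j = A p_{j+1} P (j+1)
  have hPdec : ∀ k, k < n → P k = (A : ℝ) * p (k + 1) * P (k + 1) := by
    intro k hk
    simp only [hP]
    rw [← Finset.Ico_add_one_right_eq_Icc, ← Finset.Ico_add_one_right_eq_Icc,
      Finset.prod_eq_prod_Ico_succ_bot (by omega : k + 1 < n + 1)]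
  -- key step: η k ≥ η (k+1) - P k / A for k < n
  have hstep : ∀ k, k < n →
      P (k + 1) / (1 - u (k + 1)) - P k / (A : ℝ) ≤ P k / (1 - u k) := by
    intro k hk
    have huk1 := huIoo (n - (k + 1)) (k + 1) (by omega)
    set q : ℝ := p (k + 1) * (1 - u (k + 1)) with hqdef
    have hv : 0 < 1 - u (k + 1) := by linarith [huk1.2]
    have hp1 := hp (k + 1) (by omega) (by omega)
    have hq0 : 0 < q := by have := hp1.1; positivity
    have hq2 : q < 1 / 2 := hhalf k hk
    have hD : 0 < 1 - (1 - q) ^ A := by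
      have : (1 - q) ^ A < 1 := pow_lt_one₀ (by linarith) (by linarith) (by omega)
      linarith
    -- Bernoulli: (1-q)^A ≥ 1 - A q
    have hbern : 1 - (A : ℝ) * q ≤ (1 - q) ^ A := by
      have := one_add_mul_le_pow (a := -q) (by linarith) A
      calc 1 - (A : ℝ) * q = 1 + (A : ℝ) * (-q) := by ring
        _ ≤ (1 + -q) ^ A := this
        _ = (1 - q) ^ A := by ring_nf
    -- key: (1-q) * D ≤ A q, where D = 1 - (1-q)^A
    have hkey : (1 - q) * (1 - (1 - q) ^ A) ≤ (A : ℝ) * q := by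
      nlinarith [hD.le, hq0.le]
    have huk : u k = (1 - q) ^ A := hu k hk
    rw [huk, hPdec k hk]
    set c := P (k + 1) with hc
    have hc0 : 0 < c := hPpos (k + 1)
    rw [div_sub_div _ _ (ne_of_gt hv) (ne_of_gt hA0), div_le_div_iff₀ (by positivity) hD]
    have hexp : (c * (A : ℝ) - (1 - u (k + 1)) * ((A:ℝ) * p (k + 1) * c)) *
        (1 - (1 - q) ^ A) = c * (A:ℝ) * ((1 - q) * (1 - (1 - q) ^ A)) := by
      rw [hqdef]; ring
    have hexp2 : (A:ℝ) * p (k+1) * c * ((1 - u (k+1)) * (A:ℝ))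
        = c * (A:ℝ) * ((A : ℝ) * q) := by rw [hqdef]; ring
    rw [hexp, hexp2]
    exact mul_le_mul_of_nonneg_left hkey (by positivity)
  -- telescoping: η j ≥ η (n-1) - (1/A) Σ_{k ∈ Ico j (n-1)} P k
  have hmain : ∀ d k, k + d = n - 1 →
      P (n - 1) / (1 - u (n - 1)) - (1 / (A : ℝ)) * ∑ m ∈ Finset.Ico k (n - 1), P m
        ≤ P k / (1 - u k) := by
    intro d
    induction d with
    | zero =>
      intro k hk
      have : k = n - 1 := by omega
      subst this
      simp
    | succ d ih =>
      intro k hk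
      have hk1 : k + 1 + d = n - 1 := by omega
      have hkn : k < n := by omega
      have hsum : ∑ m ∈ Finset.Ico k (n - 1), P m
          = P k + ∑ m ∈ Finset.Ico (k + 1) (n - 1), P m :=
        Finset.sum_eq_sum_Ico_succ_bot (by omega) _
      have h1 := ih (k + 1) hk1
      have h2 := hstep k hkn
      rw [hsum]
      have : (1 / (A:ℝ)) * (P k + ∑ m ∈ Finset.Ico (k + 1) (n - 1), P m)
          = P k / (A:ℝ) + (1 / (A:ℝ)) * ∑ m ∈ Finset.Ico (k + 1) (n - 1), P m := by
        field_simp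
      rw [this]
      linarith
  -- conclude
  have hPn : (∏ i ∈ Finset.Icc n n, ((A : ℝ) * p i)) = P (n - 1) := by
    simp only [hP]
    rw [Nat.sub_add_cancel hn]
  rw [hPn] at hpos ⊢
  have hη := hmain (n - 1 - j) j (by omega)
  have huj := huIoo (n - j) j (by omega)
  have huj0 : 0 < 1 - u j := by linarith [huj.2]
  set B := P (n - 1) / (1 - u (n - 1)) - (1 / (A : ℝ)) * ∑ m ∈ Finset.Ico j (n - 1), P m with hB
  rw [le_div_iff₀ hpos]
  have := (le_div_iff₀ huj0).mp hη
  linarith [this]
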